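/- For every m ≥ 1, the generating function Γ_m(X) = Σ_{n≥0} γ_{n,m} X^n, where γ_{n,m} is the number of compositions of n having mex m, is a rational power series: there exist polynomials P, Q ∈ ℤ[X] with Q ≠ 0 such that Q · Γ_m = P in ℤ⟦X⟧. -/

import Mathlib

/-- The mex of a composition: the smallest positive integer that is not a part. -/
noncomputable def Composition.mex {n : ℕ} (c : Composition n) : ℕ :=
  sInf {k : ℕ | 0 < k ∧ k ∉ c.blocks}

open Finset

-- section lists
def Lset (F : Finset ℕ) (n : ℕ) : Type := {l : List ℕ // l.sum = n ∧ ∀ x ∈ l, 0 < x ∧ x ∉ F}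

instance (F : Finset ℕ) (n : ℕ) : Finite (Lset F n) := by
  apply Finite.of_injective (fun l : Lset F n => (⟨l.1, fun {i} hi => (l.2.2 i hi).1, l.2.1⟩ : Composition n))
  intro a b h
  exact Subtype.ext (congrArg Composition.blocks h)

noncomputable def cnt (F : Finset ℕ) (n : ℕ) : ℕ := Nat.card (Lset F n)

lemma cnt_zero (F : Finset ℕ) : cnt F 0 = 1 := by
  have : Unique (Lset F 0) := by
    refine ⟨⟨⟨[], rfl, by simp⟩⟩, ?_⟩
    rintro ⟨l, hs, hp⟩
    have : l = [] := by
      cases l with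
      | nil => rfl
      | cons a t =>
        exfalso
        have h0 : a = 0 := by
          have := List.sum_eq_zero_iff.mp hs
          exact this a List.mem_cons_self
        have := (hp a List.mem_cons_self).1
        omega
    exact Subtype.ext this
  exact Nat.card_unique

lemma cnt_succ (F : Finset ℕ) (n : ℕ) :
    cnt F (n + 1) = ∑ k ∈ (Icc 1 (n+1)) \ F, cnt F (n + 1 - k) := by
  classical
  set s : Finset ℕ := (Icc 1 (n+1)) \ F with hs
  have key : Nat.card (Σ k : s, Lset F (n + 1 - (k : ℕ))) = Nat.card (Lset F (n+1)) := by
    apply Nat.card_eq_of_bijective (fun x =>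
      (⟨(x.1 : ℕ) :: x.2.1, by
        have hk := x.1.2
        simp only [hs, Finset.mem_sdiff, Finset.mem_Icc] at hk
        constructor
        · have := x.2.2.1
          simp only [List.sum_cons, this]
          omega
        · intro y hy
          rcases List.mem_cons.mp hy with h | h
          · subst h; exact ⟨by omega, hk.2⟩
          · exact x.2.2.2 y h⟩ : Lset F (n+1)))
    constructor
    · rintro ⟨⟨k, hk⟩, ⟨t, ht⟩⟩ ⟨⟨k', hk'⟩, ⟨t', ht'⟩⟩ h
      have h2 : k :: t = k' :: t' := congrArg Subtype.val h
      obtain ⟨hkk, htt⟩ := List.cons_eq_cons.mp h2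
      subst hkk; subst htt
      rfl
    · rintro ⟨l, hsum, hp⟩
      match l, hsum, hp with
      | [], hsum, hp => simp at hsum
      | a :: t, hsum, hp =>
        have ha := hp a List.mem_cons_self
        have hsum' : a + t.sum = n + 1 := by simpa using hsum
        have hmem : a ∈ s := by
          rw [hs, Finset.mem_sdiff, Finset.mem_Icc]
          exact ⟨⟨ha.1, by omega⟩, ha.2⟩
        refine ⟨⟨⟨a, hmem⟩, ⟨t, by simp only []; omega, fun y hy => hp y (List.mem_cons_of_mem a hy)⟩⟩, rfl⟩
  rw [cnt, ← key]
  have : ∀ k : s, Fintype (Lset F (n + 1 - (k : ℕ))) := fun k => Fintype.ofFinite _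
  rw [Nat.card_eq_fintype_card, Fintype.card_sigma]
  rw [← Finset.sum_coe_sort s (fun k => cnt F (n + 1 - k))]
  congr 1
  ext k
  rw [cnt, Nat.card_eq_fintype_card]

noncomputable def G (F : Finset ℕ) : PowerSeries ℤ := PowerSeries.mk (fun n => (cnt F n : ℤ))

noncomputable def fPS (F : Finset ℕ) : PowerSeries ℤ :=
  PowerSeries.mk (fun k => if 0 < k ∧ k ∉ F then 1 else 0)

lemma geom (F : Finset ℕ) : (1 - fPS F) * G F = 1 := by
  classical
  ext n
  rw [sub_mul, one_mul, map_sub]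
  cases n with
  | zero =>
    simp [PowerSeries.coeff_mul, fPS, G, cnt_zero]
  | succ n =>
    have h1 : (PowerSeries.coeff (n+1)) (fPS F * G F)
        = ∑ k ∈ Finset.range (n+2), (if 0 < k ∧ k ∉ F then ((cnt F (n+1-k) : ℤ)) else 0) := by
      rw [PowerSeries.coeff_mul, Finset.Nat.sum_antidiagonal_eq_sum_range_succ
        (fun i j => (PowerSeries.coeff i) (fPS F) * (PowerSeries.coeff j) (G F))]
      congr 1
      ext k
      simp only [fPS, G, PowerSeries.coeff_mk, ite_mul, one_mul, zero_mul]
    have h2 : (Finset.range (n+2)).filter (fun k => 0 < k ∧ k ∉ F) = Icc 1 (n+1) \ F := by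
      ext k
      simp only [Finset.mem_filter, Finset.mem_range, Finset.mem_sdiff, Finset.mem_Icc]
      constructor
      · rintro ⟨h, h1, h2⟩; exact ⟨⟨h1, by omega⟩, h2⟩
      · rintro ⟨⟨h1, h2⟩, h3⟩; exact ⟨by omega, by omega, h3⟩
    rw [h1, ← Finset.sum_filter, h2]
    simp only [G, PowerSeries.coeff_mk, cnt_succ F n]
    push_cast
    simp

def RatPS (S : PowerSeries ℤ) : Prop :=
  ∃ P Q : Polynomial ℤ, Q ≠ 0 ∧ (Q : PowerSeries ℤ) * S = (P : PowerSeries ℤ)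

lemma ratPS_zero : RatPS 0 := ⟨0, 1, one_ne_zero, by simp⟩

lemma ratPS_add {S T : PowerSeries ℤ} (hS : RatPS S) (hT : RatPS T) : RatPS (S + T) := by
  obtain ⟨P1, Q1, hQ1, h1⟩ := hS
  obtain ⟨P2, Q2, hQ2, h2⟩ := hT
  refine ⟨Q2 * P1 + Q1 * P2, Q1 * Q2, mul_ne_zero hQ1 hQ2, ?_⟩
  push_cast [Polynomial.coe_mul, Polynomial.coe_add]
  rw [← h1, ← h2]
  ring

lemma ratPS_Cmul (c : ℤ) {S : PowerSeries ℤ} (hS : RatPS S) : RatPS (PowerSeries.C c * S) := by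
  obtain ⟨P, Q, hQ, h⟩ := hS
  refine ⟨Polynomial.C c * P, Q, hQ, ?_⟩
  push_cast [Polynomial.coe_mul, Polynomial.coe_C]
  rw [mul_left_comm, h]

lemma ratG (F : Finset ℕ) (hF : ∀ k ∈ F, 0 < k) : RatPS (G F) := by
  classical
  set p : Polynomial ℤ := ∑ k ∈ F, Polynomial.X ^ k with hp
  have hpcoeff : ∀ n, p.coeff n = if n ∈ F then 1 else 0 := by
    intro n
    rw [hp, Polynomial.finset_sum_coeff]
    simp only [Polynomial.coeff_X_pow]
    simp only [eq_comm (a := n)]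
    rw [Finset.sum_ite_eq' F n (fun _ => (1:ℤ))]
  set Q : Polynomial ℤ := 1 - 2 * Polynomial.X + p - Polynomial.X * p with hQdef
  have hQcast : (Q : PowerSeries ℤ) = (1 - PowerSeries.X) * (1 - fPS F) := by
    ext n
    rw [Polynomial.coeff_coe]
    have hrhs : (PowerSeries.coeff n) ((1 - PowerSeries.X) * (1 - fPS F))
        = (PowerSeries.coeff n) (1 - PowerSeries.X - fPS F + PowerSeries.X * fPS F) := by
      ring_nf
    rw [hrhs]
    simp only [map_add, map_sub, PowerSeries.coeff_one, PowerSeries.coeff_X]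
    rw [hQdef]
    simp only [Polynomial.coeff_add, Polynomial.coeff_sub, Polynomial.coeff_one]
    cases n with
    | zero =>
      have h0 : (0:ℕ) ∉ F := fun h => absurd (hF 0 h) (by omega)
      simp [PowerSeries.coeff_zero_X_mul, hpcoeff, h0, fPS]
    | succ n =>
      rw [PowerSeries.coeff_succ_X_mul, Polynomial.coeff_X_mul]
      simp only [fPS, PowerSeries.coeff_mk, hpcoeff]
      rcases Nat.eq_zero_or_pos n with h | h
      · subst h
        have h0 : (0:ℕ) ∉ F := fun h => absurd (hF 0 h) (by omega)
        by_cases h1 : 1 ∈ F <;> simp [h0, h1]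
      · have hn1 : ¬ (n + 1 = 0) := by omega
        have hn0 : ¬ (n = 0) := by omega
        have hn2 : ¬ (n + 1 = 1) := by omega
        by_cases hA : (n+1) ∈ F <;> by_cases hB : n ∈ F <;>
          simp [hn1, hn0, hn2, hA, hB, h, Polynomial.coeff_X]
  refine ⟨1 - Polynomial.X, Q, ?_, ?_⟩
  · intro h
    have h0 : (0:ℕ) ∉ F := fun hh => absurd (hF 0 hh) (by omega)
    have := congrArg (fun q : Polynomial ℤ => q.coeff 0) h
    simp only [hQdef, Polynomial.coeff_add, Polynomial.coeff_sub, Polynomial.coeff_one,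
      Polynomial.mul_coeff_zero, Polynomial.coeff_X_zero, hpcoeff, Polynomial.coeff_zero,
      h0, if_true, if_false, if_pos rfl] at this
    simp [h0] at this
  · rw [hQcast, mul_assoc, geom, mul_one]
    push_cast [Polynomial.coe_sub, Polynomial.coe_one, Polynomial.coe_X]
    ring

lemma mex_eq_iff {n m : ℕ} (hm : 1 ≤ m) (c : Composition n) :
    c.mex = m ↔ (m ∉ c.blocks ∧ ∀ k ∈ Icc 1 (m-1), k ∈ c.blocks) := by
  have hdef : c.mex = sInf {k : ℕ | 0 < k ∧ k ∉ c.blocks} := rfl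
  rw [hdef]
  set S : Set ℕ := {k : ℕ | 0 < k ∧ k ∉ c.blocks} with hS
  have hne : S.Nonempty := by
    refine ⟨n + 1, by omega, fun h => ?_⟩
    have := List.single_le_sum (l := c.blocks) (fun x _ => Nat.zero_le x) _ h
    rw [c.blocks_sum] at this
    omega
  constructor
  · intro h
    have hmem : m ∈ S := h ▸ Nat.sInf_mem hne
    refine ⟨hmem.2, fun k hk => ?_⟩
    rw [Finset.mem_Icc] at hk
    by_contra hkb
    have : k ∈ S := ⟨by omega, hkb⟩
    have := Nat.sInf_le this
    omega
  · rintro ⟨h1, h2⟩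
    refine le_antisymm (Nat.sInf_le ⟨by omega, h1⟩) ?_
    by_contra hlt
    push_neg at hlt
    have hmem := Nat.sInf_mem hne
    have := h2 (sInf S) (Finset.mem_Icc.mpr ⟨hmem.1, by omega⟩)
    exact hmem.2 this

lemma card_comp (n : ℕ) (p : List ℕ → Prop) :
    Nat.card {c : Composition n // p c.blocks}
      = Nat.card {l : List ℕ // (l.sum = n ∧ ∀ x ∈ l, 0 < x) ∧ p l} := by
  apply Nat.card_congr
  refine ⟨fun c => ⟨c.1.blocks, ⟨c.1.blocks_sum, fun x hx => c.1.blocks_pos hx⟩, c.2⟩,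
    fun l => ⟨⟨l.1, fun {i} hi => l.2.1.2 i hi, l.2.1.1⟩, l.2.2⟩, ?_, ?_⟩
  · rintro ⟨⟨b, hb1, hb2⟩, hc⟩; rfl
  · rintro ⟨l, hl⟩; rfl

lemma incl_excl {Ω : Type} [Fintype Ω] (I : Finset ℕ) (mem : ℕ → Ω → Prop) :
    ((Nat.card {x : Ω // ∀ k ∈ I, mem k x} : ℤ))
      = ∑ T ∈ I.powerset, (-1:ℤ)^T.card * (Nat.card {x : Ω // ∀ k ∈ T, ¬ mem k x} : ℤ) := by
  classical
  symm
  have hcard : ∀ (q : Ω → Prop), (Nat.card {x : Ω // q x} : ℤ)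
      = ∑ x : Ω, if q x then 1 else 0 := by
    intro q
    rw [Nat.card_eq_fintype_card, Fintype.card_subtype, Finset.card_filter]
    push_cast
    simp
  calc ∑ T ∈ I.powerset, (-1:ℤ)^T.card * (Nat.card {x : Ω // ∀ k ∈ T, ¬ mem k x} : ℤ)
      = ∑ T ∈ I.powerset, ∑ x : Ω, (if ∀ k ∈ T, ¬ mem k x then (-1:ℤ)^T.card else 0) := by
        refine Finset.sum_congr rfl fun T _ => ?_
        rw [hcard, Finset.mul_sum]
        refine Finset.sum_congr rfl fun x _ => ?_
        split_ifs <;> ring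
    _ = ∑ x : Ω, ∑ T ∈ I.powerset, (if ∀ k ∈ T, ¬ mem k x then (-1:ℤ)^T.card else 0) :=
        Finset.sum_comm
    _ = ∑ x : Ω, (if ∀ k ∈ I, mem k x then 1 else 0) := by
        refine Finset.sum_congr rfl fun x _ => ?_
        rw [← Finset.sum_filter]
        have hps : (I.powerset.filter (fun T => ∀ k ∈ T, ¬ mem k x))
            = (I.filter (fun k => ¬ mem k x)).powerset := by
          ext T
          simp only [Finset.mem_filter, Finset.mem_powerset, Finset.subset_iff]
          constructor
          · rintro ⟨h1, h2⟩ k hk; exact ⟨h1 hk, h2 k hk⟩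
          · intro h; exact ⟨fun k hk => (h hk).1, fun k hk => (h hk).2⟩
        rw [hps, Finset.sum_powerset_neg_one_pow_card]
        congr 1
        simp only [Finset.filter_eq_empty_iff, eq_iff_iff]
        push_neg
        tauto
    _ = (Nat.card {x : Ω // ∀ k ∈ I, mem k x} : ℤ) := by rw [hcard]; congr!

lemma ratPS_sum {ι : Type} (s : Finset ι) (f : ι → PowerSeries ℤ)
    (h : ∀ i ∈ s, RatPS (f i)) : RatPS (∑ i ∈ s, f i) := by
  classical
  induction s using Finset.induction with
  | empty => simpa using ratPS_zero
  | @insert a s ha ih =>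
    rw [Finset.sum_insert ha]
    exact ratPS_add (h a (Finset.mem_insert_self a s))
      (ih fun i hi => h i (Finset.mem_insert_of_mem hi))

lemma count_eq {m : ℕ} (hm : 1 ≤ m) (n : ℕ) :
    (Nat.card {c : Composition n // c.mex = m} : ℤ)
      = ∑ T ∈ (Icc 1 (m-1)).powerset, (-1:ℤ)^T.card * (cnt (insert m T) n : ℤ) := by
  classical
  have e1 : Nat.card {c : Composition n // c.mex = m}
      = Nat.card {c : Composition n // m ∉ c.blocks ∧ ∀ k ∈ Icc 1 (m-1), k ∈ c.blocks} :=
    Nat.card_congr (Equiv.subtypeEquivRight (fun c => mex_eq_iff hm c))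
  have e2 : Nat.card {c : Composition n // m ∉ c.blocks ∧ ∀ k ∈ Icc 1 (m-1), k ∈ c.blocks}
      = Nat.card {x : {c : Composition n // m ∉ c.blocks} // ∀ k ∈ Icc 1 (m-1), k ∈ x.1.blocks} :=
    (Nat.card_congr (Equiv.subtypeSubtypeEquivSubtypeInter
      (fun c : Composition n => m ∉ c.blocks) (fun c => ∀ k ∈ Icc 1 (m-1), k ∈ c.blocks)))
      |>.symm
  haveI : Fintype {c : Composition n // m ∉ c.blocks} := Fintype.ofFinite _
  rw [e1, e2, incl_excl (Icc 1 (m-1)) (fun k (x : {c : Composition n // m ∉ c.blocks}) => k ∈ x.1.blocks)]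
  refine Finset.sum_congr rfl fun T hT => ?_
  congr 2
  have e3 : Nat.card {x : {c : Composition n // m ∉ c.blocks} // ∀ k ∈ T, ¬ k ∈ x.1.blocks}
      = Nat.card {c : Composition n // m ∉ c.blocks ∧ ∀ k ∈ T, k ∉ c.blocks} :=
    Nat.card_congr (Equiv.subtypeSubtypeEquivSubtypeInter
      (fun c : Composition n => m ∉ c.blocks) (fun c => ∀ k ∈ T, k ∉ c.blocks))
  rw [e3, card_comp n (fun l => m ∉ l ∧ ∀ k ∈ T, k ∉ l), cnt]
  apply Nat.card_congr
  apply Equiv.subtypeEquivRight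
  intro l
  constructor
  · rintro ⟨⟨hs, hp⟩, hm', hTl⟩
    refine ⟨hs, fun x hx => ⟨hp x hx, fun hmem => ?_⟩⟩
    rcases Finset.mem_insert.mp hmem with h | h
    · exact hm' (h ▸ hx)
    · exact hTl x h hx
  · rintro ⟨hs, h⟩
    exact ⟨⟨hs, fun x hx => (h x hx).1⟩,
      fun hml => (h m hml).2 (Finset.mem_insert_self m T),
      fun k hk hkl => (h k hkl).2 (Finset.mem_insert_of_mem hk)⟩

/-- for every `m ≥ 1`, the generating function of compositions with mex `m`
is a rational power series. -/
theorem stmt_4 (m : ℕ) (hm : 1 ≤ m) :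
    ∃ P Q : Polynomial ℤ, Q ≠ 0 ∧
      (Q : PowerSeries ℤ) *
          PowerSeries.mk (fun n => (Nat.card {c : Composition n // c.mex = m} : ℤ)) =
        (P : PowerSeries ℤ) := by
  classical
  have hser : PowerSeries.mk (fun n => (Nat.card {c : Composition n // c.mex = m} : ℤ))
      = ∑ T ∈ (Icc 1 (m-1)).powerset,
          PowerSeries.C ((-1:ℤ)^T.card) * G (insert m T) := by
    ext n
    rw [PowerSeries.coeff_mk, map_sum, count_eq hm n]
    refine Finset.sum_congr rfl fun T hT => ?_
    rw [PowerSeries.coeff_C_mul, G, PowerSeries.coeff_mk]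
  rw [hser]
  apply ratPS_sum
  intro T hT
  apply ratPS_Cmul
  apply ratG
  intro k hk
  rcases Finset.mem_insert.mp hk with h | h
  · omega
  · have := (Finset.mem_Icc.mp (Finset.mem_powerset.mp hT h)).1
    omega
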